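/- Let n ≥ 2 and let f : Sₙ → A be any function. Then the determinant of the Sₙ × Sₙ matrix whose (z,y) entry is z·f(y) is divisible in A by ∏_{1 ≤ i < j ≤ n} (xⱼ − xᵢ)^{n!/2}. -/

import Mathlib

namespace Stmt15

open scoped BigOperators

/-- The Laurent polynomial ring `A = ℤ[x₁^{±1},…,xₙ^{±1}]`, as the group algebra of `ℤⁿ`. -/
abbrev A (n : ℕ) : Type := AddMonoidAlgebra ℤ (Fin n →₀ ℤ)

/-- The action of `w ∈ Sₙ` on `A` permuting the variables (`xᵢ ↦ x_{w i}`). -/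
noncomputable def permAct (n : ℕ) (w : Equiv.Perm (Fin n)) : A n ≃ₐ[ℤ] A n :=
  AddMonoidAlgebra.domCongr ℤ ℤ (Finsupp.domCongr w)

/-- The variable `xᵢ`. -/
noncomputable def xvar {n : ℕ} (i : Fin n) : A n :=
  AddMonoidAlgebra.single (Finsupp.single i 1) 1

noncomputable instance (n : ℕ) : IsDomain (A n) := NoZeroDivisors.to_isDomain _

variable {n : ℕ}

lemma single_mul_single' (a b : Fin n →₀ ℤ) (c d : ℤ) :
    (AddMonoidAlgebra.single a c * AddMonoidAlgebra.single b d : A n)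
      = AddMonoidAlgebra.single (a + b) (c * d) :=
  AddMonoidAlgebra.single_mul_single _ _ _ _

lemma xpow (i : Fin n) (k : ℕ) :
    (xvar i : A n) ^ k = AddMonoidAlgebra.single (Finsupp.single i (k : ℤ)) 1 := by
  induction k with
  | zero => simp [AddMonoidAlgebra.one_def]
  | succ k ih =>
      rw [pow_succ, ih, xvar, single_mul_single', ← Finsupp.single_add, mul_one]
      push_cast
      ring_nf

lemma aux_factor (i j : Fin n) (k : ℕ) :
    (AddMonoidAlgebra.single (Finsupp.single i (k : ℤ) - Finsupp.single j (k : ℤ)) 1 - 1 : A n)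
      = AddMonoidAlgebra.single (-Finsupp.single j (k : ℤ)) 1 * ((xvar i) ^ k - (xvar j) ^ k) := by
  rw [xpow, xpow, mul_sub, single_mul_single', single_mul_single', neg_add_eq_sub,
    neg_add_cancel, mul_one]
  rfl

lemma L0 (i j : Fin n) (c : ℤ) :
    (xvar j - xvar i : A n) ∣
      AddMonoidAlgebra.single (Finsupp.single i c - Finsupp.single j c) 1 - 1 := by
  rcases le_total 0 c with h | h
  · have hk : ((c.toNat : ℤ)) = c := Int.toNat_of_nonneg h
    rw [← hk, aux_factor i j c.toNat]
    exact Dvd.dvd.mul_left (dvd_sub_comm.mp (sub_dvd_pow_sub_pow (xvar j) (xvar i) c.toNat)) _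
  · have hk : (((-c).toNat : ℤ)) = -c := Int.toNat_of_nonneg (by omega)
    have hexp : Finsupp.single i c - Finsupp.single j c
        = Finsupp.single j ((-c).toNat : ℤ) - Finsupp.single i ((-c).toNat : ℤ) := by
      rw [hk, Finsupp.single_neg, Finsupp.single_neg]
      abel
    rw [hexp, aux_factor j i]
    exact Dvd.dvd.mul_left (sub_dvd_pow_sub_pow (xvar j) (xvar i) _) _

lemma dvd_single_shift (i j : Fin n) (m : Fin n →₀ ℤ) (c d : ℤ) :
    (xvar j - xvar i : A n) ∣
      AddMonoidAlgebra.single (m + (Finsupp.single i c - Finsupp.single j c)) d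
        - AddMonoidAlgebra.single m d := by
  have key : AddMonoidAlgebra.single (m + (Finsupp.single i c - Finsupp.single j c)) d
      - AddMonoidAlgebra.single m d
      = AddMonoidAlgebra.single m d *
        (AddMonoidAlgebra.single (Finsupp.single i c - Finsupp.single j c) 1 - 1 : A n) := by
    rw [mul_sub, single_mul_single', mul_one, mul_one]
  rw [key]
  exact (L0 i j c).mul_left _

lemma permAct_single (w : Equiv.Perm (Fin n)) (m : Fin n →₀ ℤ) (d : ℤ) :
    permAct n w (AddMonoidAlgebra.single m d)
      = AddMonoidAlgebra.single (Finsupp.equivMapDomain w m) d := by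
  simp [permAct]

lemma permAct_mul (u v : Equiv.Perm (Fin n)) (a : A n) :
    permAct n (u * v) a = permAct n u (permAct n v a) := by
  induction a using AddMonoidAlgebra.induction_linear with
  | zero => simp
  | add f g hf hg => rw [map_add, map_add, map_add, hf, hg]
  | single m d =>
      rw [permAct_single, permAct_single, permAct_single]
      congr 1
      ext x
      simp [Finsupp.equivMapDomain_apply, Equiv.Perm.mul_def]

lemma swap_exp (i j : Fin n) (m : Fin n →₀ ℤ) :
    m = Finsupp.equivMapDomain (Equiv.swap i j) m
        + (Finsupp.single i (m i - m j) - Finsupp.single j (m i - m j)) := by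
  ext x
  rcases eq_or_ne x i with rfl | hxi
  · rcases eq_or_ne x j with rfl | hxj
    · simp [Finsupp.equivMapDomain_apply]
    · simp [Finsupp.equivMapDomain_apply, Finsupp.single_apply, hxj, hxj.symm,
        Equiv.swap_apply_left]
  · rcases eq_or_ne x j with rfl | hxj
    · simp [Finsupp.equivMapDomain_apply, Finsupp.single_apply, hxi, hxi.symm,
        Equiv.swap_apply_right]
    · simp [Finsupp.equivMapDomain_apply, Finsupp.single_apply, hxi.symm, hxj.symm,
        Equiv.swap_apply_of_ne_of_ne hxi hxj]

lemma dvd_sub_permAct_swap (i j : Fin n) (a : A n) :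
    (xvar j - xvar i : A n) ∣ a - permAct n (Equiv.swap i j) a := by
  induction a using AddMonoidAlgebra.induction_linear with
  | zero => simp
  | add f g hf hg =>
      obtain ⟨cf, hcf⟩ := hf
      obtain ⟨cg, hcg⟩ := hg
      exact ⟨cf + cg, by rw [map_add, mul_add, ← hcf, ← hcg, sub_add_sub_comm]⟩
  | single m d =>
      rw [permAct_single]
      have h := dvd_single_shift i j (Finsupp.equivMapDomain (Equiv.swap i j) m)
        (m i - m j) d
      rw [← swap_exp i j m] at h
      exact h

/-- The substitution `x_j ↦ x_i` on exponents. -/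
noncomputable def qhom (i j : Fin n) : (Fin n →₀ ℤ) →+ (Fin n →₀ ℤ) where
  toFun m := m + (Finsupp.single i (m j) - Finsupp.single j (m j))
  map_zero' := by simp
  map_add' a b := by
    simp only [Finsupp.add_apply, Finsupp.single_add]
    abel

noncomputable def phi (i j : Fin n) : A n →+* A n :=
  AddMonoidAlgebra.mapDomainRingHom ℤ (qhom i j)

lemma phi_single (i j : Fin n) (m : Fin n →₀ ℤ) (d : ℤ) :
    phi i j (AddMonoidAlgebra.single m d) = AddMonoidAlgebra.single (qhom i j m) d := by
  simp [phi, Finsupp.mapDomain_single]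

lemma dvd_sub_phi (i j : Fin n) (a : A n) :
    (xvar j - xvar i : A n) ∣ a - phi i j a := by
  induction a using AddMonoidAlgebra.induction_linear with
  | zero => simp
  | add f g hf hg =>
      obtain ⟨cf, hcf⟩ := hf
      obtain ⟨cg, hcg⟩ := hg
      exact ⟨cf + cg, by rw [map_add, mul_add, ← hcf, ← hcg, sub_add_sub_comm]⟩
  | single m d =>
      rw [phi_single]
      exact dvd_sub_comm.mp (dvd_single_shift i j m (m j) d)

lemma qhom_single (i j t : Fin n) (hij : i ≠ j) :
    qhom i j (Finsupp.single t 1) = Finsupp.single (if t = j then i else t) 1 := by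
  rcases eq_or_ne t j with rfl | htj
  · simp [qhom, Finsupp.single_apply]
  · simp [qhom, Finsupp.single_apply, htj, if_neg (fun h : t = j => htj h)]

lemma phi_xvar (i j t : Fin n) (hij : i ≠ j) :
    phi i j (xvar t) = xvar (if t = j then i else t) := by
  rw [xvar, phi_single, qhom_single i j t hij, xvar]

lemma xvar_inj {a b : Fin n} (h : (xvar a : A n) = xvar b) : a = b := by
  rw [xvar, xvar] at h
  rcases AddMonoidAlgebra.single_inj.mp h with ⟨h1, _⟩ | ⟨h1, _⟩
  · rcases (Finsupp.single_eq_single_iff _ _ _ _).mp h1 with ⟨h2, _⟩ | ⟨h2, _⟩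
    · exact h2
    · exact absurd h2 one_ne_zero
  · exact absurd h1 one_ne_zero

lemma p_ne_zero {i j : Fin n} (hij : i ≠ j) : (xvar j - xvar i : A n) ≠ 0 := by
  intro h
  exact hij (xvar_inj (sub_eq_zero.mp h)).symm

lemma span_eq_ker (i j : Fin n) (hij : i ≠ j) :
    Ideal.span {(xvar j - xvar i : A n)} = RingHom.ker (phi i j) := by
  apply le_antisymm
  · rw [Ideal.span_le, Set.singleton_subset_iff]
    have : phi i j (xvar j - xvar i) = 0 := by
      rw [map_sub, phi_xvar i j j hij, phi_xvar i j i hij, if_pos rfl, if_neg hij, sub_self]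
    exact this
  · intro a ha
    rw [RingHom.mem_ker] at ha
    have h := dvd_sub_phi i j a
    rw [ha, sub_zero] at h
    exact Ideal.mem_span_singleton.mpr h

lemma prime_p (i j : Fin n) (hij : i ≠ j) : Prime (xvar j - xvar i : A n) := by
  rw [← Ideal.span_singleton_prime (p_ne_zero hij), span_eq_ker i j hij,
    ← Ideal.Quotient.isDomain_iff_prime]
  exact MulEquiv.isDomain (RingHom.range (phi i j))
    (RingHom.quotientKerEquivRange (phi i j)).toMulEquiv

lemma not_dvd_p {i j k l : Fin n} (hij : i < j) (hkl : k < l)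
    (hne : (i, j) ≠ (k, l)) : ¬ (xvar j - xvar i : A n) ∣ (xvar l - xvar k) := by
  intro h
  have hker : (xvar l - xvar k : A n) ∈ RingHom.ker (phi i j) := by
    rw [← span_eq_ker i j hij.ne]
    exact Ideal.mem_span_singleton.mpr h
  rw [RingHom.mem_ker, map_sub, phi_xvar i j l hij.ne, phi_xvar i j k hij.ne,
    sub_eq_zero] at hker
  have heq := xvar_inj hker
  rcases eq_or_ne l j with rfl | hlj
  · rw [if_pos rfl, if_neg hkl.ne] at heq
    exact hne (by rw [heq])
  · rcases eq_or_ne k j with rfl | hkj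
    · rw [if_neg hlj, if_pos rfl] at heq
      exact (lt_trans hij hkl).ne' heq
    · rw [if_neg hlj, if_neg hkj] at heq
      exact hkl.ne' heq
  
lemma prod_pow_dvd {α : Type*} [CommMonoidWithZero α] [IsCancelMulZero α] {ι : Type*} [DecidableEq ι]
    (s : Finset ι) (q : ι → α) (hq : ∀ t ∈ s, Prime (q t))
    (hnd : ∀ t ∈ s, ∀ u ∈ s, t ≠ u → ¬ q t ∣ q u) (k : ℕ) :
    ∀ d : α, (∀ t ∈ s, q t ^ k ∣ d) → (∏ t ∈ s, q t ^ k) ∣ d := by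
  induction s using Finset.induction_on with
  | empty => intro d _; simpa using one_dvd d

  | insert a s ha ih =>
      intro d hd
      obtain ⟨e, rfl⟩ := hd a (Finset.mem_insert_self a s)
      rw [Finset.prod_insert ha]
      refine mul_dvd_mul_left _ (ih (fun t ht => hq t (Finset.mem_insert_of_mem ht))
        (fun t ht u hu htu => hnd t (Finset.mem_insert_of_mem ht) u
          (Finset.mem_insert_of_mem hu) htu) e (fun t ht => ?_))
      have hta : t ≠ a := by rintro rfl; exact ha ht
      have hnotdvd : ¬ q t ∣ q a ^ k := by
        intro hh
        exact hnd t (Finset.mem_insert_of_mem ht) a (Finset.mem_insert_self a s) hta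
          ((hq t (Finset.mem_insert_of_mem ht)).dvd_of_dvd_pow hh)
      exact (hq t (Finset.mem_insert_of_mem ht)).pow_dvd_of_dvd_mul_left k hnotdvd
        (hd t (Finset.mem_insert_of_mem ht))

lemma det_sub_rows {ι : Type*} [DecidableEq ι] [Fintype ι] {R : Type*} [CommRing R]
    (M : Matrix ι ι R) (σ : ι → ι) (s : Finset ι)
    (hs : ∀ z ∈ s, σ z ∉ s ∧ σ z ≠ z) :
    (Matrix.of fun z y => if z ∈ s then M z y - M (σ z) y else M z y).det = M.det := by
  induction s using Finset.induction_on with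
  | empty =>
      have he : (Matrix.of fun z y => if z ∈ (∅ : Finset ι) then M z y - M (σ z) y else M z y)
          = M := Matrix.ext fun z y => by simp
      rw [he]
  | insert a s ha ih =>
      have hσa : σ a ∉ insert a s ∧ σ a ≠ a := hs a (Finset.mem_insert_self a s)
      have hset : (Matrix.of fun z y => if z ∈ insert a s then M z y - M (σ z) y else M z y)
          = (Matrix.of fun z y => if z ∈ s then M z y - M (σ z) y else M z y).updateRow a
            ((Matrix.of fun z y => if z ∈ s then M z y - M (σ z) y else M z y) a
              + (-1 : R) • (Matrix.of fun z y => if z ∈ s then M z y - M (σ z) y else M z y)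
                  (σ a)) := by
        refine Matrix.ext fun z y => ?_
        by_cases hz : z = a
        · subst hz
          rw [Matrix.updateRow_self]
          have h1 : z ∉ s := ha
          have h2 : σ z ∉ s := fun hh => hσa.1 (Finset.mem_insert_of_mem hh)
          simp [h1, h2, Finset.mem_insert, sub_eq_add_neg]
        · rw [Matrix.updateRow_ne hz]
          simp [Finset.mem_insert, hz]
      rw [hset, Matrix.det_updateRow_add_smul_self _ (Ne.symm hσa.2) (-1)]
      exact ih (fun z hz => ⟨fun hh => (hs z (Finset.mem_insert_of_mem hz)).1
        (Finset.mem_insert_of_mem hh), (hs z (Finset.mem_insert_of_mem hz)).2⟩)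

lemma card_bad (i j : Fin n) (hij : i ≠ j) :
    (Finset.univ.filter fun z : Equiv.Perm (Fin n) => z⁻¹ j < z⁻¹ i).card
      = n.factorial / 2 := by
  classical
  set τ := Equiv.swap i j with hτ
  have hcards : (Finset.univ.filter fun z : Equiv.Perm (Fin n) => z⁻¹ j < z⁻¹ i).card
      = (Finset.univ.filter fun z : Equiv.Perm (Fin n) => ¬ z⁻¹ j < z⁻¹ i).card := by
    apply Finset.card_bij' (fun z _ => τ * z) (fun z _ => τ * z)
    · intro z hz
      rw [Finset.mem_filter] at hz ⊢
      refine ⟨Finset.mem_univ _, ?_⟩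
      have h1 : (τ * z)⁻¹ j = z⁻¹ i := by
        rw [mul_inv_rev, Equiv.Perm.mul_apply, hτ, Equiv.swap_inv, Equiv.swap_apply_right]
      have h2 : (τ * z)⁻¹ i = z⁻¹ j := by
        rw [mul_inv_rev, Equiv.Perm.mul_apply, hτ, Equiv.swap_inv, Equiv.swap_apply_left]
      rw [h1, h2]
      exact not_lt.mpr (le_of_lt hz.2)
    · intro z hz
      rw [Finset.mem_filter] at hz ⊢
      refine ⟨Finset.mem_univ _, ?_⟩
      have h1 : (τ * z)⁻¹ j = z⁻¹ i := by
        rw [mul_inv_rev, Equiv.Perm.mul_apply, hτ, Equiv.swap_inv, Equiv.swap_apply_right]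
      have h2 : (τ * z)⁻¹ i = z⁻¹ j := by
        rw [mul_inv_rev, Equiv.Perm.mul_apply, hτ, Equiv.swap_inv, Equiv.swap_apply_left]
      rw [h1, h2]
      have hne : z⁻¹ i ≠ z⁻¹ j := fun h => hij (z⁻¹.injective h)
      exact lt_of_le_of_ne (not_lt.mp hz.2) hne
    · intro z _
      rw [← mul_assoc, hτ, Equiv.swap_mul_self, one_mul]
    · intro z _
      rw [← mul_assoc, hτ, Equiv.swap_mul_self, one_mul]
  have hsum := Finset.card_filter_add_card_filter_not
    (s := (Finset.univ : Finset (Equiv.Perm (Fin n))))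
    (p := fun z : Equiv.Perm (Fin n) => z⁻¹ j < z⁻¹ i)
  rw [Finset.card_univ, Fintype.card_perm, Fintype.card_fin] at hsum
  omega

lemma pair_dvd (f : Equiv.Perm (Fin n) → A n) (i j : Fin n) (hij : i < j) :
    (xvar j - xvar i : A n) ^ (n.factorial / 2) ∣
      (Matrix.of fun z y : Equiv.Perm (Fin n) => permAct n z (f y)).det := by
  classical
  set M : Matrix (Equiv.Perm (Fin n)) (Equiv.Perm (Fin n)) (A n) :=
    Matrix.of fun z y : Equiv.Perm (Fin n) => permAct n z (f y) with hM
  set τ := Equiv.swap i j with hτ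
  set s : Finset (Equiv.Perm (Fin n)) :=
    Finset.univ.filter fun z : Equiv.Perm (Fin n) => z⁻¹ j < z⁻¹ i with hs
  have hmem : ∀ z : Equiv.Perm (Fin n), z ∈ s ↔ z⁻¹ j < z⁻¹ i := by
    intro z; rw [hs, Finset.mem_filter]; simp
  have hcond : ∀ z ∈ s, τ * z ∉ s ∧ τ * z ≠ z := by
    intro z hz
    rw [hmem] at hz
    constructor
    · rw [hmem]
      have h1 : (τ * z)⁻¹ j = z⁻¹ i := by
        rw [mul_inv_rev, Equiv.Perm.mul_apply, hτ, Equiv.swap_inv, Equiv.swap_apply_right]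
      have h2 : (τ * z)⁻¹ i = z⁻¹ j := by
        rw [mul_inv_rev, Equiv.Perm.mul_apply, hτ, Equiv.swap_inv, Equiv.swap_apply_left]
      rw [h1, h2]
      exact not_lt.mpr (le_of_lt hz)
    · intro h
      have : τ = 1 := by
        have := mul_right_cancel (h.trans (one_mul z).symm)
        exact this
      rw [hτ, Equiv.swap_eq_one_iff] at this
      exact hij.ne this
  have h1 : (Matrix.of fun z y => if z ∈ s then M z y - M (τ * z) y else M z y).det
      = M.det := det_sub_rows M (fun z => τ * z) s hcond
  have hdvd : ∀ z y : Equiv.Perm (Fin n),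
      (xvar j - xvar i : A n) ∣ M z y - M (τ * z) y := by
    intro z y
    have hMz : M (τ * z) y = permAct n τ (M z y) := by
      rw [hM]
      show permAct n (τ * z) (f y) = permAct n τ (permAct n z (f y))
      exact permAct_mul τ z (f y)
    rw [hMz]
    exact dvd_sub_permAct_swap i j (M z y)
  choose w hw using fun z y => hdvd z y
  have h2 : (Matrix.of fun z y => if z ∈ s then M z y - M (τ * z) y else M z y)
      = Matrix.of fun z y => (if z ∈ s then (xvar j - xvar i : A n) else 1)
          * (if z ∈ s then w z y else M z y) := by
    refine Matrix.ext fun z y => ?_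
    by_cases hz : z ∈ s
    · simp only [Matrix.of_apply, if_pos hz]
      exact hw z y
    · simp [Matrix.of_apply, if_neg hz]
  have hd := Matrix.det_mul_column (fun z => if z ∈ s then (xvar j - xvar i : A n) else 1)
    (Matrix.of fun z y => if z ∈ s then w z y else M z y)
  simp only [Matrix.of_apply] at hd
  rw [h2, hd] at h1
  have h3 : (∏ z : Equiv.Perm (Fin n), if z ∈ s then (xvar j - xvar i : A n) else 1)
      = (xvar j - xvar i : A n) ^ (n.factorial / 2) := by
    rw [Finset.prod_ite, Finset.prod_const, Finset.prod_const_one, mul_one,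
      Finset.filter_mem_eq_inter, Finset.univ_inter]
    rw [hs, card_bad i j hij.ne]
  rw [h3] at h1
  exact ⟨_, h1.symm⟩

theorem stmt15 (n : ℕ) (hn : 2 ≤ n) (f : Equiv.Perm (Fin n) → A n) :
    (∏ p ∈ Finset.univ.filter fun p : Fin n × Fin n => p.1 < p.2,
        (xvar p.2 - xvar p.1) ^ (Nat.factorial n / 2)) ∣
      Matrix.det (Matrix.of fun z y : Equiv.Perm (Fin n) => permAct n z (f y)) := by
  classical
  apply prod_pow_dvd
  · intro t ht
    rw [Finset.mem_filter] at ht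
    exact prime_p t.1 t.2 ht.2.ne
  · intro t ht u hu htu
    rw [Finset.mem_filter] at ht hu
    exact not_dvd_p ht.2 hu.2 (by
      intro hh
      apply htu
      exact Prod.ext (congrArg Prod.fst hh) (congrArg Prod.snd hh))
  · intro t ht
    rw [Finset.mem_filter] at ht
    exact pair_dvd f t.1 t.2 ht.2

end Stmt15
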